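/- Let B be a noetherian normal domain, I an ideal of B, and B̂ the I-adic completion of B. Let f ∈ B̂ be a non-zerodivisor such that the vanishing locus V(f) is contained in V(I·B̂). Then there exists a Zariski open covering Spec B = ⋃_j Spec B_j such that on each (B_j)^ (the I-adic completion of B_j) one can write f = g_j·u_j with g_j ∈ B_j and u_j a unit of (B_j)^. -/

import Mathlib

/-- The `I`-adic completion of a commutative ring `B`, realized as the subring of
compatible families in `Π n, B ⧸ I ^ n`. -/
def AdicCpl {B : Type*} [CommRing B] (I : Ideal B) : Subring (∀ n : ℕ, B ⧸ I ^ n) where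
  carrier := {x | ∀ ⦃m n : ℕ⦄ (h : m ≤ n),
    Ideal.Quotient.factor (Ideal.pow_le_pow_right h) (x n) = x m}
  mul_mem' {x y} hx hy := by
    intro m n h
    rw [Pi.mul_apply, Pi.mul_apply, _root_.map_mul, hx h, hy h]
  one_mem' := by
    intro m n h
    rw [Pi.one_apply, Pi.one_apply, _root_.map_one]
  add_mem' {x y} hx hy := by
    intro m n h
    rw [Pi.add_apply, Pi.add_apply, _root_.map_add, hx h, hy h]
  zero_mem' := by
    intro m n h
    rw [Pi.zero_apply, Pi.zero_apply, _root_.map_zero]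
  neg_mem' {x} hx := by
    intro m n h
    rw [Pi.neg_apply, Pi.neg_apply, _root_.map_neg, hx h]

/-- The canonical ring homomorphism from `B` to its `I`-adic completion. -/
def toAdicCpl {B : Type*} [CommRing B] (I : Ideal B) : B →+* AdicCpl I where
  toFun b := ⟨fun n => Ideal.Quotient.mk (I ^ n) b, fun m n h => Ideal.Quotient.factor_mk _ b⟩
  map_one' := Subtype.ext (funext fun n => _root_.map_one _)
  map_mul' a b := Subtype.ext (funext fun n => _root_.map_mul _ a b)
  map_zero' := Subtype.ext (funext fun n => _root_.map_zero _)
  map_add' a b := Subtype.ext (funext fun n => _root_.map_add _ a b)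

/-- Functoriality of the adic completion along a ring homomorphism. -/
def adicCplMap {B C : Type*} [CommRing B] [CommRing C] (I : Ideal B) (φ : B →+* C) :
    AdicCpl I →+* AdicCpl (I.map φ) where
  toFun x := ⟨fun n => Ideal.quotientMap ((I.map φ) ^ n) φ
      (by rw [← Ideal.map_pow]; exact Ideal.le_comap_map) (x.1 n), by
    intro m n h
    obtain ⟨b, hb⟩ := Ideal.Quotient.mk_surjective (x.1 n)
    have h2 : (x.1 m) = Ideal.Quotient.mk (I ^ m) b := by
      rw [← x.2 h, ← hb, Ideal.Quotient.factor_mk]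
    show Ideal.Quotient.factor _ (Ideal.quotientMap _ φ _ (x.1 n))
      = Ideal.quotientMap _ φ _ (x.1 m)
    rw [← hb, h2, Ideal.quotientMap_mk, Ideal.Quotient.factor_mk, Ideal.quotientMap_mk]⟩
  map_one' := Subtype.ext (funext fun n => by
    show Ideal.quotientMap _ φ _ 1 = 1
    exact _root_.map_one _)
  map_mul' a b := Subtype.ext (funext fun n => by
    show Ideal.quotientMap _ φ _ (a.1 n * b.1 n) = _
    exact _root_.map_mul _ _ _)
  map_zero' := Subtype.ext (funext fun n => by
    show Ideal.quotientMap _ φ _ 0 = 0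
    exact _root_.map_zero _)
  map_add' a b := Subtype.ext (funext fun n => by
    show Ideal.quotientMap _ φ _ (a.1 n + b.1 n) = _
    exact _root_.map_add _ _ _)

section Aux
variable {B : Type*} [CommRing B] (I : Ideal B)

lemma AdicCpl.mul_apply (x y : AdicCpl I) (n : ℕ) : (x * y).1 n = x.1 n * y.1 n := rfl
lemma AdicCpl.add_apply (x y : AdicCpl I) (n : ℕ) : (x + y).1 n = x.1 n + y.1 n := rfl
lemma AdicCpl.sub_apply (x y : AdicCpl I) (n : ℕ) : (x - y).1 n = x.1 n - y.1 n := rfl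
lemma AdicCpl.one_apply (n : ℕ) : (1 : AdicCpl I).1 n = 1 := rfl
lemma toAdicCpl_apply (b : B) (n : ℕ) : (toAdicCpl I b).1 n = Ideal.Quotient.mk (I ^ n) b := rfl

lemma AdicCpl.sum_apply {α : Type*} (S : Finset α) (F : α → AdicCpl I) (n : ℕ) :
    (∑ t ∈ S, F t).1 n = ∑ t ∈ S, (F t).1 n := by
  have h := map_sum (AdicCpl I).subtype F S
  have h2 := congrFun h n
  simpa using h2

end Aux

section Unit
variable {B : Type*} [CommRing B] {I : Ideal B}

lemma AdicCpl.isUnit_component {w : AdicCpl I} (h1 : w.1 1 = 1) (n : ℕ) : IsUnit (w.1 n) := by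
  rcases Nat.eq_zero_or_pos n with hn | hn
  · subst hn
    have h := w.2 (Nat.zero_le 1)
    rw [h1] at h
    rw [← h, _root_.map_one]
    exact isUnit_one
  · obtain ⟨r, hr⟩ := Ideal.Quotient.mk_surjective (w.1 n)
    have hfac := w.2 hn
    rw [← hr, Ideal.Quotient.factor_mk] at hfac
    -- hfac : mk (I^1) r = w.1 1 = 1
    have hr1 : r - 1 ∈ I ^ 1 := by
      rw [← Ideal.Quotient.eq_zero_iff_mem, _root_.map_sub, hfac, h1, _root_.map_one, sub_self]
    have hr1' : r - 1 ∈ I := by rwa [pow_one] at hr1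
    have hnil : IsNilpotent (Ideal.Quotient.mk (I ^ n) (r - 1)) := by
      refine ⟨n, ?_⟩
      rw [← _root_.map_pow, Ideal.Quotient.eq_zero_iff_mem]
      exact Ideal.pow_mem_pow hr1' n
    have := hnil.isUnit_add_one
    have heq : Ideal.Quotient.mk (I ^ n) (r - 1) + 1 = Ideal.Quotient.mk (I ^ n) r := by
      rw [_root_.map_sub, _root_.map_one, sub_add_cancel]
    rw [heq, hr] at this
    exact this

lemma AdicCpl.isUnit_of_first {w : AdicCpl I} (h1 : w.1 1 = 1) : IsUnit w := by
  have hn : ∀ n, IsUnit (w.1 n) := AdicCpl.isUnit_component h1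
  set v : ∀ n : ℕ, B ⧸ I ^ n := fun n => ↑(hn n).unit⁻¹ with hv
  have hvspec : ∀ n, w.1 n * v n = 1 := by
    intro n
    rw [hv]
    have := (hn n).unit.mul_inv
    rwa [(hn n).unit_spec] at this
  have hvmem : v ∈ AdicCpl I := by
    intro m n h
    have h2 : w.1 m * Ideal.Quotient.factor (Ideal.pow_le_pow_right h) (v n)
        = 1 := by
      rw [← w.2 h, ← _root_.map_mul, hvspec n, _root_.map_one]
    calc Ideal.Quotient.factor (Ideal.pow_le_pow_right h) (v n)
        = (w.1 m * v m) * Ideal.Quotient.factor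
            (Ideal.pow_le_pow_right h) (v n) := by rw [hvspec m, one_mul]
      _ = (w.1 m * Ideal.Quotient.factor
            (Ideal.pow_le_pow_right h) (v n)) * v m := by ring
      _ = v m := by rw [h2, one_mul]
  refine ⟨⟨w, ⟨v, hvmem⟩, ?_, ?_⟩, rfl⟩
  · exact Subtype.ext (funext fun n => hvspec n)
  · exact Subtype.ext (funext fun n => by
      have := hvspec n
      rw [mul_comm] at this
      exact this)

end Unit

section Key
variable {B : Type*} [CommRing B] {I : Ideal B}

/-- decomposition of elements of `I^(N+k)` over a generating finset of `I^N`,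
with coefficients in `I^k`. -/
lemma decomp {N : ℕ} {S : Finset B} (hS : Ideal.span (↑S : Set B) = I ^ N)
    (k : ℕ) (ξ : B) (hξ : ξ ∈ I ^ (N + k)) :
    ∃ d : B → B, (∀ t, d t ∈ I ^ k) ∧ ξ = ∑ t ∈ S, t * d t := by
  rw [pow_add] at hξ
  refine Submodule.mul_induction_on hξ ?_ ?_
  · intro m hm n hn
    rw [← hS] at hm
    obtain ⟨c, -, hc⟩ := Submodule.mem_span_finset.mp hm
    refine ⟨fun t => c t * n, fun t => Ideal.mul_mem_left _ _ hn, ?_⟩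
    rw [← hc, Finset.sum_mul]
    refine Finset.sum_congr rfl fun t _ => by simp only [smul_eq_mul]; ring
  · rintro x y ⟨d, hdI, hd⟩ ⟨d', hdI', hd'⟩
    refine ⟨fun t => d t + d' t, fun t => Ideal.add_mem _ (hdI t) (hdI' t), ?_⟩
    rw [hd, hd', ← Finset.sum_add_distrib]
    refine Finset.sum_congr rfl fun t _ => by ring

/-- **Key lemma**: an element of the completion whose `N`-th component vanishes lies in the
ideal generated by (the image of) `I^N`; moreover we can decompose it explicitly. -/
lemma AdicCpl.exists_decomp (N : ℕ) (hfg : (I ^ N).FG) (x : AdicCpl I) (hx : x.1 N = 0) :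
    ∃ (S : Finset B) (y : B → AdicCpl I), (↑S : Set B) ⊆ (I ^ N : Ideal B) ∧
      x = ∑ t ∈ S, toAdicCpl I t * y t := by
  obtain ⟨S, hS⟩ := hfg
  have hSsub : (↑S : Set B) ⊆ (I ^ N : Ideal B) := by
    rw [← hS]; exact Ideal.subset_span
  -- choose representatives
  choose ρ hρ using fun k => Ideal.Quotient.mk_surjective (x.1 (N + k))
  have hρN : ∀ k, ρ k ∈ I ^ N := by
    intro k
    have h := x.2 (Nat.le_add_right N k)
    rw [← hρ k, Ideal.Quotient.factor_mk] at h
    rw [hx] at h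
    exact (Ideal.Quotient.eq_zero_iff_mem).mp h
  have hρdiff : ∀ k, ρ (k + 1) - ρ k ∈ I ^ (N + k) := by
    intro k
    have h := x.2 (show N + k ≤ N + (k + 1) by omega)
    rw [← hρ (k + 1), Ideal.Quotient.factor_mk, ← hρ k] at h
    exact (Ideal.Quotient.mk_eq_mk_iff_sub_mem _ _).mp h
  choose δ hδI hδeq using fun k => decomp hS (k := k) _ (hρdiff k)
  obtain ⟨c0, _, hc0⟩ := decomp hS (k := 0) (ρ 0) (by simpa using hρN 0)
  set c : ℕ → B → B := fun k => Nat.rec c0 (fun k ck => ck + δ k) k with hcdef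
  have hcsucc : ∀ k, c (k + 1) = c k + δ k := fun k => rfl
  have hc : ∀ k, ρ k = ∑ t ∈ S, t * c k t := by
    intro k
    induction k with
    | zero => exact hc0
    | succ k ih =>
      have h2 : ρ (k + 1) = (∑ t ∈ S, t * c k t) + ∑ t ∈ S, t * δ k t := by
        rw [← ih, ← hδeq k]; ring
      rw [h2, hcsucc k, ← Finset.sum_add_distrib]
      refine Finset.sum_congr rfl fun t _ => by simp only [Pi.add_apply]; ring
  have hcdiff : ∀ m n, m ≤ n → ∀ t, c n t - c m t ∈ I ^ m := by
    intro m n h t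
    induction n, h using Nat.le_induction with
    | base => simpa using Ideal.zero_mem _
    | succ n hmn ih =>
      have : c (n + 1) t - c m t = (c n t - c m t) + δ n t := by
        rw [hcsucc n]; simp [Pi.add_apply]; ring
      rw [this]
      exact Ideal.add_mem _ ih (Ideal.pow_le_pow_right hmn (hδI n t))
  -- build the coefficients in the completion
  refine ⟨S, fun t => ⟨fun n => Ideal.Quotient.mk (I ^ n) (c n t), ?_⟩, hSsub, ?_⟩
  · intro m n h
    rw [Ideal.Quotient.factor_mk]
    exact (Ideal.Quotient.mk_eq_mk_iff_sub_mem _ _).mpr (hcdiff m n h t)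
  · refine Subtype.ext (funext fun n => ?_)
    rw [AdicCpl.sum_apply]
    have hxn : x.1 n = Ideal.Quotient.mk (I ^ n) (ρ n) := by
      have h := x.2 (Nat.le_add_left n N)
      rw [← hρ n, Ideal.Quotient.factor_mk] at h
      exact h.symm
    rw [hxn, hc n, _root_.map_sum]
    refine Finset.sum_congr rfl fun t _ => by
      rw [_root_.map_mul]; rfl

end Key


lemma adicCplMap_toAdicCpl {B C : Type*} [CommRing B] [CommRing C] (I : Ideal B)
    (φ : B →+* C) (b : B) :
    adicCplMap I φ (toAdicCpl I b) = toAdicCpl (I.map φ) (φ b) := by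
  refine Subtype.ext (funext fun n => ?_)
  show Ideal.quotientMap _ φ _ (Ideal.Quotient.mk (I ^ n) b) = Ideal.Quotient.mk ((I.map φ) ^ n) (φ b)
  rw [Ideal.quotientMap_mk]

set_option maxHeartbeats 2000000 in
/-- Let `B` be a noetherian normal domain, `I` an ideal of `B`, and `B̂`
the `I`-adic completion of `B`.  Let `f ∈ B̂` be a non-zerodivisor such that `V(f) ⊆ V(I·B̂)`
(every prime of `B̂` containing `f` contains `I·B̂`).  Then there is a Zariski open covering
`Spec B = ⋃ⱼ Spec B[1/sⱼ]` (elements `sⱼ` generating the unit ideal) such that on the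
`I`-adic completion of each `B[1/sⱼ]` one can write `f = gⱼ·uⱼ` with `gⱼ ∈ B[1/sⱼ]` and
`uⱼ` a unit of the completion. -/
theorem nonzerodivisor_locally_principal_up_to_unit
    {B : Type*} [CommRing B] [IsDomain B] [IsNoetherianRing B] [IsIntegrallyClosed B]
    (I : Ideal B) (f : AdicCpl I)
    (hf : f ∈ nonZeroDivisors (AdicCpl I))
    (hV : ∀ P : Ideal (AdicCpl I), P.IsPrime → f ∈ P → I.map (toAdicCpl I) ≤ P) :
    ∃ s : Finset B, Ideal.span (s : Set B) = ⊤ ∧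
      ∀ j ∈ s, ∃ g : Localization.Away j,
        ∃ u : (AdicCpl (I.map (algebraMap B (Localization.Away j))))ˣ,
          adicCplMap I (algebraMap B (Localization.Away j)) f =
            toAdicCpl (I.map (algebraMap B (Localization.Away j))) g * u := by
  classical
  set τ := toAdicCpl I with hτdef
  set F : Ideal (AdicCpl I) := Ideal.span {f} with hFdef
  have hrad : Ideal.map τ I ≤ F.radical := by
    rw [Ideal.radical_eq_sInf]
    refine le_sInf ?_
    rintro P ⟨hFP, hP⟩
    exact hV P hP (hFP (Ideal.mem_span_singleton_self f))
  have hfg : (Ideal.map τ I).FG := Ideal.FG.map (IsNoetherian.noetherian I) τ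
  obtain ⟨N, hN⟩ := Ideal.exists_pow_le_of_le_radical_of_fg hrad hfg
  have hNle : Ideal.map τ (I ^ N) ≤ F := by rw [Ideal.map_pow]; exact hN
  obtain ⟨b, hb⟩ := Ideal.Quotient.mk_surjective (f.1 N)
  set κ : AdicCpl I := f - τ b with hκdef
  have hκN : κ.1 N = 0 := by
    rw [hκdef, AdicCpl.sub_apply, toAdicCpl_apply, hb, sub_self]
  obtain ⟨S, y, hSsub, hdec⟩ := AdicCpl.exists_decomp N (IsNoetherian.noetherian _) κ hκN
  have hτt : ∀ t ∈ S, τ t ∈ F := fun t ht => hNle (Ideal.mem_map_of_mem τ (hSsub ht))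
  have hwex : ∀ t : B, ∃ c : AdicCpl I, t ∈ S → τ t = f * c := by
    intro t
    by_cases ht : t ∈ S
    · obtain ⟨c, hc⟩ := Ideal.mem_span_singleton'.mp (hτt t ht)
      exact ⟨c, fun _ => by rw [← hc, mul_comm]⟩
    · exact ⟨0, fun h => absurd h ht⟩
  choose w hw using hwex
  have hκF : κ ∈ F := by
    rw [hdec]
    exact Ideal.sum_mem _ fun t ht => Ideal.mul_mem_right _ _ (hτt t ht)
  obtain ⟨z, hz⟩ := Ideal.mem_span_singleton'.mp hκF
  have hτb : τ b = f * (1 - z) := by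
    have h1 : τ b = f - κ := by rw [hκdef]; ring
    rw [h1, ← hz]; ring
  have hqf : ((1 - z) + ∑ t ∈ S, w t * y t) * f = 1 * f := by
    rw [one_mul, add_mul, Finset.sum_mul]
    have h1 : ∀ t ∈ S, w t * y t * f = τ t * y t := fun t ht => by
      rw [hw t ht]; ring
    rw [Finset.sum_congr rfl h1, ← hdec]
    have h2 : (1 - z) * f = τ b := by rw [hτb]; ring
    rw [h2, hκdef]; ring
  have hq : ((1 - z) + ∑ t ∈ S, w t * y t) = 1 :=
    (mul_cancel_right_mem_nonZeroDivisors hf).mp hqf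
  choose e he using fun t => Ideal.Quotient.mk_surjective ((y t).1 1)
  set w' : AdicCpl I := (1 - z) + ∑ t ∈ S, τ (e t) * w t with hw'def
  have hw'1 : w'.1 1 = 1 := by
    have hcomp := congrArg (fun x : AdicCpl I => x.1 1) hq
    simp only [AdicCpl.add_apply, AdicCpl.sum_apply, AdicCpl.mul_apply, AdicCpl.one_apply]
      at hcomp
    rw [hw'def, AdicCpl.add_apply, AdicCpl.sum_apply]
    rw [show ∑ t ∈ S, (τ (e t) * w t).1 1 = ∑ t ∈ S, (w t).1 1 * (y t).1 1 from
      Finset.sum_congr rfl fun t _ => by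
        rw [AdicCpl.mul_apply, toAdicCpl_apply, he t, mul_comm]]
    exact hcomp
  have hWu : IsUnit w' := AdicCpl.isUnit_of_first hw'1
  have hWspec : (hWu.unit : AdicCpl I) = w' := hWu.unit_spec
  set W := hWu.unit with hWdef
  set g₀ : B := b + ∑ t ∈ S, e t * t with hg₀def
  have hfw' : f * w' = τ g₀ := by
    rw [hw'def, hg₀def, _root_.map_add, _root_.map_sum, mul_add, Finset.mul_sum, ← hτb]
    congr 1
    refine Finset.sum_congr rfl fun t ht => ?_
    rw [_root_.map_mul]
    have : f * (τ (e t) * w t) = τ (e t) * (f * w t) := by ring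
    rw [this, ← hw t ht]
  have hfeq : f = τ g₀ * ↑W⁻¹ := by
    calc f = (f * ↑W) * ↑W⁻¹ := by rw [mul_assoc, W.mul_inv, mul_one]
    _ = τ g₀ * ↑W⁻¹ := by rw [hWspec, hfw']
  refine ⟨{1}, by simp, ?_⟩
  intro j _
  set φ := algebraMap B (Localization.Away j) with hφdef
  set ψ := adicCplMap I φ with hψdef
  refine ⟨φ g₀, (Units.map ψ.toMonoidHom W)⁻¹, ?_⟩
  have h1 : ψ (τ g₀) = toAdicCpl (I.map φ) (φ g₀) := adicCplMap_toAdicCpl I φ g₀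
  have h2 : ψ ↑W⁻¹ = ↑(Units.map ψ.toMonoidHom W)⁻¹ := by
    rw [← MonoidHom.map_inv (Units.map ψ.toMonoidHom) W]
    exact (Units.coe_map ψ.toMonoidHom W⁻¹).symm
  rw [hfeq, _root_.map_mul, h1, h2]
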